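/- Let (ξ_i, F_i)_{i=1,...,n} be martingale differences with −b ≤ ξ_i ≤ 1 a.s. for some constant b > 0, and X_k = Σ_{i=1}^k ξ_i. Then for every x ≥ 0, P(max_{1≤k≤n} X_k ≥ x) ≤ exp{−2x²/U_n(x,b)}, where U_n(x,b) = min{n(1+b)², 4(nb + x/3)}. -/

import Mathlib

open MeasureTheory Real Finset

set_option maxHeartbeats 1000000

open MeasureTheory Real Finset

/-- For `u ≤ 0`, `exp u ≤ 1 + u + u^2/2`. -/
lemma AH_exp_le_quad {u : ℝ} (hu : u ≤ 0) : Real.exp u ≤ 1 + u + u^2/2 := by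
  set H : ℝ → ℝ := fun u => 1 + u + u^2/2 - Real.exp u with hH
  have hderiv : ∀ v : ℝ, HasDerivAt H (1 + v - Real.exp v) v := by
    intro v
    have h1 : HasDerivAt (fun u : ℝ => 1 + u + u^2/2) (1 + 2 * v ^ 1 / 2) v := by
      have := ((hasDerivAt_id v).const_add (1:ℝ)).add ((hasDerivAt_pow 2 v).div_const 2)
      simp at this ⊢
      exact this
    have := h1.sub (Real.hasDerivAt_exp v)
    refine this.congr_deriv ?_
    ring
  have hanti : AntitoneOn H (Set.Iic 0) := by
    have := antitoneOn_of_deriv_nonpos (convex_Iic (0:ℝ))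
      (Continuous.continuousOn (by
        have : Continuous H := by
          apply Continuous.sub
          · continuity
          · exact Real.continuous_exp
        exact this))
      (fun v _ => (hderiv v).differentiableAt.differentiableWithinAt)
      (fun v _ => by
        rw [(hderiv v).deriv]
        have := Real.add_one_le_exp v
        linarith)
    exact this
  have h0 : H 0 = 0 := by simp [hH]
  have := hanti (Set.mem_Iic.2 hu) (Set.mem_Iic.2 le_rfl) hu
  rw [h0] at this
  simp only [hH] at this
  linarith

/-- For `0 ≤ l`, `1 + l + l^2/2 ≤ exp l`. -/
lemma AH_quad_le_exp {l : ℝ} (hl : 0 ≤ l) : 1 + l + l^2/2 ≤ Real.exp l := by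
  have := Real.sum_le_exp_of_nonneg hl 3
  simp [Finset.sum_range_succ] at this
  linarith

/-- `exp x - 1 - x` as a tsum. -/
lemma AH_exp_sub_eq_tsum (x : ℝ) :
    Real.exp x - 1 - x = ∑' k : ℕ, x^(k+2) / Nat.factorial (k+2) := by
  have hsum : Summable (fun n : ℕ => x ^ n / Nat.factorial n) := Real.summable_pow_div_factorial x
  have hexp : Real.exp x = ∑' n : ℕ, x ^ n / Nat.factorial n := by
    rw [Real.exp_eq_exp_ℝ, NormedSpace.exp_eq_tsum_div]
  have h1 : ∑' n : ℕ, x ^ n / Nat.factorial n = x^0/Nat.factorial 0 + ∑' k : ℕ, x ^ (k+1) / Nat.factorial (k+1) :=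
    Summable.tsum_eq_zero_add hsum
  have hsum1 : Summable (fun k : ℕ => x ^ (k+1) / Nat.factorial (k+1)) :=
    (summable_nat_add_iff 1).2 hsum
  have h2 : ∑' k : ℕ, x ^ (k+1) / Nat.factorial (k+1) = x^1/Nat.factorial 1 + ∑' k : ℕ, x ^ (k+2) / Nat.factorial (k+2) := by
    have := Summable.tsum_eq_zero_add hsum1
    simpa using this
  rw [hexp, h1, h2]
  simp

lemma AH_summable_shift (x : ℝ) :
    Summable (fun k : ℕ => x ^ (k+2) / Nat.factorial (k+2)) :=
  (summable_nat_add_iff 2).2 (Real.summable_pow_div_factorial x)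

/-- For `0 ≤ l` and `0 ≤ t ≤ 1`, `exp (l*t) - 1 - l*t ≤ (exp l - 1 - l) * t^2`. -/
lemma AH_exp_mul_le {l t : ℝ} (hl : 0 ≤ l) (ht0 : 0 ≤ t) (ht1 : t ≤ 1) :
    Real.exp (l*t) - 1 - l*t ≤ (Real.exp l - 1 - l) * t^2 := by
  rw [AH_exp_sub_eq_tsum, AH_exp_sub_eq_tsum]
  rw [← tsum_mul_right]
  refine Summable.tsum_le_tsum ?_ (AH_summable_shift _) ((AH_summable_shift l).mul_right _)
  intro k
  have hpow : t ^ (k+2) ≤ t ^ 2 := pow_le_pow_of_le_one ht0 ht1 (by omega)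
  have h1 : (0:ℝ) ≤ l ^ (k+2) / Nat.factorial (k+2) := by positivity
  calc (l*t) ^ (k+2) / Nat.factorial (k+2)
      = t ^ (k+2) * (l ^ (k+2) / Nat.factorial (k+2)) := by rw [mul_pow]; ring
    _ ≤ t ^ 2 * (l ^ (k+2) / Nat.factorial (k+2)) := mul_le_mul_of_nonneg_right hpow h1
    _ = l ^ (k+2) / Nat.factorial (k+2) * t ^ 2 := by ring

lemma AH_factorial_ge (k : ℕ) : (2 * 3 ^ k : ℝ) ≤ Nat.factorial (k + 2) := by
  induction k with
  | zero => norm_num [Nat.factorial]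
  | succ k ih =>
    have h3 : (3 : ℝ) ≤ (k + 3 : ℕ) := by push_cast; linarith
    calc (2 * 3 ^ (k+1) : ℝ) = 3 * (2 * 3 ^ k) := by ring
    _ ≤ (k + 3 : ℕ) * Nat.factorial (k + 2) := by
        apply mul_le_mul h3 ih (by positivity) (by positivity)
    _ = Nat.factorial (k + 3) := by
        rw [show Nat.factorial (k+3) = (k+3) * Nat.factorial (k+2) from Nat.factorial_succ (k+2),
          Nat.cast_mul]

/-- Bernstein's bound: for `0 ≤ l < 3`, `exp l - 1 - l ≤ l^2 / (2 * (1 - l/3))`. -/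
lemma AH_bernstein_mgf {l : ℝ} (hl : 0 ≤ l) (hl3 : l < 3) :
    Real.exp l - 1 - l ≤ l^2 / (2 * (1 - l/3)) := by
  rw [AH_exp_sub_eq_tsum]
  have h13 : (0:ℝ) ≤ l / 3 := by positivity
  have h23 : l / 3 < 1 := by linarith
  have hgeo : Summable (fun k : ℕ => l^2/2 * (l/3) ^ k) :=
    (summable_geometric_of_lt_one h13 h23).mul_left _
  have hle : ∀ k : ℕ, l ^ (k+2) / Nat.factorial (k+2) ≤ l^2/2 * (l/3) ^ k := by
    intro k
    have h1 : l ^ (k+2) / Nat.factorial (k+2) ≤ l ^ (k+2) / (2 * 3 ^ k) := by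
      apply div_le_div_of_nonneg_left (by positivity) (by positivity) (AH_factorial_ge k)
    refine h1.trans (le_of_eq ?_)
    rw [pow_add, div_pow]
    field_simp
  calc ∑' k : ℕ, l ^ (k+2) / Nat.factorial (k+2)
      ≤ ∑' k : ℕ, l^2/2 * (l/3) ^ k := Summable.tsum_le_tsum hle (AH_summable_shift l) hgeo
    _ = l^2/2 * (1 - l/3)⁻¹ := by rw [tsum_mul_left, tsum_geometric_of_lt_one h13 h23]
    _ = l^2 / (2 * (1 - l/3)) := by
        rw [div_mul_eq_div_div]
        ring

/-- Hoeffding's scalar lemma: for `0 < p < 1` and all `u`,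
`1 - p + p * exp u ≤ exp (p*u + u^2/8)`. -/
lemma AH_hoeffding_scalar {p : ℝ} (hp0 : 0 < p) (hp1 : p < 1) (u : ℝ) :
    1 - p + p * Real.exp u ≤ Real.exp (p*u + u^2/8) := by
  set d : ℝ → ℝ := fun v => 1 - p + p * Real.exp v with hd
  have hdpos : ∀ v, 0 < d v := fun v => by
    have := Real.exp_pos v
    simp only [hd]
    nlinarith
  have hdd : ∀ v, HasDerivAt d (p * Real.exp v) v := fun v => by
    exact ((Real.hasDerivAt_exp v).const_mul p).const_add (1 - p)
  set F : ℝ → ℝ := fun v => v^2/8 + p*v - Real.log (d v) with hF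
  set F' : ℝ → ℝ := fun v => v/4 + p - p * Real.exp v / d v with hF'
  have hFd : ∀ v, HasDerivAt F (F' v) v := fun v => by
    have h1 : HasDerivAt (fun v : ℝ => v^2/8 + p*v) ((2:ℕ)*v^1/8 + p) v := by
      exact ((hasDerivAt_pow 2 v).div_const 8).add (by simpa using (hasDerivAt_id v).const_mul p)
    have h2 : HasDerivAt (fun v => Real.log (d v)) (p * Real.exp v / d v) v :=
      (hdd v).log (hdpos v).ne'
    have h3 := h1.sub h2
    refine h3.congr_deriv ?_
    simp only [hF']
    push_cast
    ring
  have hF'd : ∀ v, HasDerivAt F' (1/4 - p * Real.exp v * (1 - p) / (d v)^2) v := fun v => by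
    have h2 : HasDerivAt (fun v => p * Real.exp v / d v)
        ((p * Real.exp v * d v - p * Real.exp v * (p * Real.exp v)) / (d v)^2) v :=
      ((Real.hasDerivAt_exp v).const_mul p).div (hdd v) (hdpos v).ne'
    have h1 : HasDerivAt (fun v : ℝ => v/4 + p) (1/4) v := by
      simpa using ((hasDerivAt_id v).div_const 4).add_const p
    have h3 := h1.sub h2
    refine h3.congr_deriv ?_
    have hdne : d v ≠ 0 := (hdpos v).ne'
    field_simp
    ring
  have hF''nonneg : ∀ v, 0 ≤ 1/4 - p * Real.exp v * (1 - p) / (d v)^2 := fun v => by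
    rw [sub_nonneg, div_le_iff₀ (pow_pos (hdpos v) 2)]
    have h := sq_nonneg ((1 - p) - p * Real.exp v)
    have hdv : d v = 1 - p + p * Real.exp v := rfl
    nlinarith [Real.exp_pos v]
  have hF'mono : Monotone F' :=
    monotone_of_deriv_nonneg (fun v => (hF'd v).differentiableAt)
      (fun v => by rw [(hF'd v).deriv]; exact hF''nonneg v)
  have hF'0 : F' 0 = 0 := by
    simp only [hF', hd, Real.exp_zero, mul_one]
    have : 1 - p + p = 1 := by ring
    rw [this]
    simp
  have hF0 : F 0 = 0 := by
    simp only [hF, hd, Real.exp_zero, mul_one, mul_zero]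
    have : 1 - p + p = 1 := by ring
    rw [this]
    simp
  have hFdiff : Differentiable ℝ F := fun v => (hFd v).differentiableAt
  have hFnonneg : 0 ≤ F u := by
    rcases le_total 0 u with hv | hv
    · have hmono : MonotoneOn F (Set.Ici (0:ℝ)) :=
        monotoneOn_of_deriv_nonneg (convex_Ici 0) hFdiff.continuous.continuousOn
          (fun v _ => hFdiff.differentiableAt.differentiableWithinAt)
          (fun v hv => by
            rw [(hFd v).deriv, ← hF'0]
            exact hF'mono (le_of_lt (by simpa using hv)))
      have := hmono (Set.self_mem_Ici) (Set.mem_Ici.2 hv) hv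
      rwa [hF0] at this
    · have hanti : AntitoneOn F (Set.Iic (0:ℝ)) :=
        antitoneOn_of_deriv_nonpos (convex_Iic 0) hFdiff.continuous.continuousOn
          (fun v _ => hFdiff.differentiableAt.differentiableWithinAt)
          (fun v hv => by
            rw [(hFd v).deriv, ← hF'0]
            exact hF'mono (le_of_lt (by simpa using hv)))
      have := hanti (Set.mem_Iic.2 hv) (Set.self_mem_Iic) hv
      rwa [hF0] at this
  have hlog : Real.log (d u) ≤ p*u + u^2/8 := by
    simp only [hF] at hFnonneg
    linarith
  calc 1 - p + p * Real.exp u = d u := rfl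
    _ = Real.exp (Real.log (d u)) := (Real.exp_log (hdpos u)).symm
    _ ≤ Real.exp (p*u + u^2/8) := Real.exp_le_exp.2 hlog

/-- The exponential supermartingale engine: if `exp (l * ξ i) ≤ A + B * ξ i` a.e. with
`A ≤ exp c`, then the maximal probability is bounded by `exp (n*c - l*x)`. -/
lemma AH_engine {Ω : Type*} [m : MeasurableSpace Ω] (μ : Measure Ω)
    [IsProbabilityMeasure μ] (n : ℕ) (ℱ : ℕ → MeasurableSpace Ω)
    (hmono : Monotone ℱ) (hle : ∀ i, ℱ i ≤ m)
    (ξ : ℕ → Ω → ℝ) (b : ℝ)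
    (hadapt : ∀ i, 1 ≤ i → i ≤ n → Measurable[ℱ i] (ξ i))
    (hint : ∀ i, 1 ≤ i → i ≤ n → Integrable (ξ i) μ)
    (hmart : ∀ i, 1 ≤ i → i ≤ n → (μ[ξ i | ℱ (i-1)]) =ᵐ[μ] 0)
    (hbound : ∀ i, 1 ≤ i → i ≤ n → ∀ᵐ ω ∂μ, -b ≤ ξ i ω ∧ ξ i ω ≤ 1)
    (l c A B : ℝ) (hl : 0 ≤ l) (hc : 0 ≤ c) (hA : A ≤ Real.exp c)
    (hpt : ∀ i, 1 ≤ i → i ≤ n → ∀ᵐ ω ∂μ, Real.exp (l * ξ i ω) ≤ A + B * ξ i ω)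
    (x : ℝ) :
    μ {ω | ∃ k, 1 ≤ k ∧ k ≤ n ∧ x ≤ ∑ i ∈ Finset.Icc 1 k, ξ i ω}
      ≤ ENNReal.ofReal (Real.exp ((n:ℝ)*c - l*x)) := by
  classical
  set 𝒢 : Filtration ℕ m := ⟨ℱ, hmono, hle⟩ with h𝒢
  set g : ℕ → Ω → ℝ :=
    fun k ω => Real.exp (l * (∑ i ∈ Finset.Icc 1 (min k n), ξ i ω) - k * c) with hg
  -- measurability
  have hmeasS : ∀ j k, j ≤ k → j ≤ n →
      Measurable[ℱ k] (fun ω => ∑ i ∈ Finset.Icc 1 j, ξ i ω) := by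
    intro j k hjk hjn
    apply Finset.measurable_sum
    intro i hi
    rw [Finset.mem_Icc] at hi
    exact (hadapt i hi.1 (hi.2.trans hjn)).le (hmono (hi.2.trans hjk))
  have hgm : ∀ k, Measurable[ℱ k] (g k) := by
    intro k
    exact Real.measurable_exp.comp
      (((hmeasS (min k n) k (min_le_left _ _) (min_le_right _ _)).const_mul l).sub
        measurable_const)
  have hgm' : ∀ k, Measurable (g k) := fun k => (hgm k).le (hle k)
  -- a.e. bounds, all indices at once
  have hball : ∀ᵐ ω ∂μ, ∀ i, 1 ≤ i → i ≤ n → (-b ≤ ξ i ω ∧ ξ i ω ≤ 1) := by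
    rw [ae_all_iff]
    intro i
    by_cases h1 : 1 ≤ i ∧ i ≤ n
    · filter_upwards [hbound i h1.1 h1.2] with ω hω
      exact fun _ _ => hω
    · filter_upwards with ω h1' h2'
      exact absurd ⟨h1', h2'⟩ h1
  -- a.e. bound for g
  have hgbdd : ∀ k, ∀ᵐ ω ∂μ, ‖g k ω‖ ≤ Real.exp (l * k) := by
    intro k
    filter_upwards [hball] with ω hω
    have hS : (∑ i ∈ Finset.Icc 1 (min k n), ξ i ω) ≤ k := by
      calc (∑ i ∈ Finset.Icc 1 (min k n), ξ i ω)
          ≤ ∑ _i ∈ Finset.Icc 1 (min k n), (1:ℝ) := by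
            apply Finset.sum_le_sum
            intro i hi
            rw [Finset.mem_Icc] at hi
            exact (hω i hi.1 (hi.2.trans (min_le_right _ _))).2
        _ = ((min k n : ℕ) : ℝ) := by
            rw [Finset.sum_const, Nat.card_Icc]
            simp
        _ ≤ (k : ℝ) := by exact_mod_cast Nat.cast_le.2 (min_le_left _ _)
    rw [hg, Real.norm_eq_abs, Real.abs_exp, Real.exp_le_exp]
    have h1 : l * (∑ i ∈ Finset.Icc 1 (min k n), ξ i ω) ≤ l * k :=
      mul_le_mul_of_nonneg_left hS hl
    have h2 : 0 ≤ (k:ℝ) * c := by positivity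
    linarith
  have hgint : ∀ k, Integrable (g k) μ := fun k =>
    Integrable.mono' (integrable_const (Real.exp (l * k)))
      (hgm' k).aestronglyMeasurable (hgbdd k)
  have hgpos : ∀ k ω, 0 < g k ω := fun k ω => Real.exp_pos _
  have hadp : StronglyAdapted 𝒢 g := fun k => (hgm k).stronglyMeasurable
  -- one-step supermartingale property
  have hstep : ∀ k, μ[g (k + 1)|𝒢 k] ≤ᵐ[μ] g k := by
    intro k
    by_cases hk : n ≤ k
    · -- both sides are already determined by time n ≤ k
      have hmin1 : min (k+1) n = n := min_eq_right (hk.trans (Nat.le_succ k))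
      have hmin : min k n = n := min_eq_right hk
      have heq : g (k+1) = fun ω => Real.exp (-c) * g k ω := by
        funext ω
        rw [hg]
        simp only [hmin1, hmin]
        rw [← Real.exp_add]
        congr 1
        push_cast
        ring
      have hsm : StronglyMeasurable[𝒢 k] (g (k+1)) := by
        rw [heq]
        exact ((hgm k).const_mul _).stronglyMeasurable
      rw [condExp_of_stronglyMeasurable (hle k) hsm (hgint (k+1))]
      filter_upwards with ω
      rw [heq]
      have h1 : Real.exp (-c) ≤ 1 := Real.exp_le_one_iff.2 (by linarith)
      have h2 : Real.exp (-c) * g k ω ≤ 1 * g k ω :=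
        mul_le_mul_of_nonneg_right h1 (hgpos k ω).le
      show Real.exp (-c) * g k ω ≤ g k ω
      linarith
    · push_neg at hk
      have hkn : k + 1 ≤ n := hk
      have hmin1 : min (k+1) n = k+1 := min_eq_left hkn
      have hmin : min k n = k := min_eq_left hk.le
      have hξm : Measurable (ξ (k+1)) := (hadapt (k+1) (by omega) hkn).le (hle (k+1))
      have heq : g (k+1) = g k * (fun ω => Real.exp (-c) * Real.exp (l * ξ (k+1) ω)) := by
        funext ω
        rw [hg]
        simp only [hmin1, hmin, Pi.mul_apply]
        rw [← Real.exp_add, ← Real.exp_add]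
        congr 1
        rw [Finset.sum_Icc_succ_top (by omega : 1 ≤ k + 1)]
        push_cast
        ring
      have hexpint : Integrable (fun ω => Real.exp (l * ξ (k+1) ω)) μ := by
        refine Integrable.mono' (integrable_const (Real.exp l))
          (Real.measurable_exp.comp (hξm.const_mul l)).aestronglyMeasurable ?_
        filter_upwards [hball] with ω hω
        rw [Real.norm_eq_abs, Real.abs_exp, Real.exp_le_exp]
        have := (hω (k+1) (by omega) hkn).2
        nlinarith
      have hhint : Integrable (fun ω => Real.exp (-c) * Real.exp (l * ξ (k+1) ω)) μ :=
        hexpint.const_mul _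
      have hghint : Integrable (g k * (fun ω => Real.exp (-c) * Real.exp (l * ξ (k+1) ω))) μ := by
        rw [← heq]; exact hgint (k+1)
      have hpull : μ[g k * (fun ω => Real.exp (-c) * Real.exp (l * ξ (k+1) ω))|𝒢 k]
          =ᵐ[μ] g k * μ[(fun ω => Real.exp (-c) * Real.exp (l * ξ (k+1) ω))|𝒢 k] :=
        condExp_mul_of_stronglyMeasurable_left (hadp k) hghint hhint
      -- bound the conditional expectation of h
      have hABint : Integrable (fun ω => A + B * ξ (k+1) ω) μ := by
        have := (integrable_const (A : ℝ)).add ((hint (k+1) (by omega) hkn).const_mul B)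
        simpa using this
      have hcondexp_le : μ[(fun ω => Real.exp (l * ξ (k+1) ω))|𝒢 k] ≤ᵐ[μ]
          μ[(fun ω => A + B * ξ (k+1) ω)|𝒢 k] :=
        condExp_mono hexpint hABint (hpt (k+1) (by omega) hkn)
      have hcondAB : μ[(fun ω => A + B * ξ (k+1) ω)|𝒢 k] =ᵐ[μ] fun _ => A := by
        have h1 : μ[(fun ω => A + B * ξ (k+1) ω)|𝒢 k]
            =ᵐ[μ] μ[(fun _ => A)|𝒢 k] + μ[(fun ω => B * ξ (k+1) ω)|𝒢 k] := by
          have := condExp_add (μ := μ) (m := 𝒢 k) (integrable_const (A:ℝ))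
            ((hint (k+1) (by omega) hkn).const_mul B)
          exact this
        have h2 : μ[(fun ω => B * ξ (k+1) ω)|𝒢 k] =ᵐ[μ] B • μ[ξ (k+1)|𝒢 k] := by
          have := condExp_smul (μ := μ) (m := 𝒢 k) (B : ℝ) (ξ (k+1))
          exact this
        have h3 : μ[ξ (k+1)|𝒢 k] =ᵐ[μ] 0 := by
          have := hmart (k+1) (by omega) hkn
          simpa using this
        filter_upwards [h1, h2, h3] with ω hω1 hω2 hω3
        rw [hω1]
        simp only [Pi.add_apply, condExp_const (𝒢.le k)]
        rw [hω2]
        simp only [Pi.smul_apply, smul_eq_mul]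
        rw [hω3]
        simp
      have hcondh : μ[(fun ω => Real.exp (-c) * Real.exp (l * ξ (k+1) ω))|𝒢 k]
          ≤ᵐ[μ] fun _ => 1 := by
        have hs : μ[(fun ω => Real.exp (-c) * Real.exp (l * ξ (k+1) ω))|𝒢 k]
            =ᵐ[μ] Real.exp (-c) • μ[(fun ω => Real.exp (l * ξ (k+1) ω))|𝒢 k] := by
          have := condExp_smul (μ := μ) (m := 𝒢 k) (Real.exp (-c))
            (fun ω => Real.exp (l * ξ (k+1) ω))
          exact this
        filter_upwards [hs, hcondexp_le, hcondAB] with ω hω1 hω2 hω3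
        rw [hω1]
        simp only [Pi.smul_apply, smul_eq_mul]
        have h4 : (μ[(fun ω => Real.exp (l * ξ (k+1) ω))|𝒢 k]) ω ≤ A := hω3 ▸ hω2
        have h5 : (0:ℝ) ≤ Real.exp (-c) := (Real.exp_pos _).le
        calc Real.exp (-c) * (μ[(fun ω => Real.exp (l * ξ (k+1) ω))|𝒢 k]) ω
            ≤ Real.exp (-c) * Real.exp c := mul_le_mul_of_nonneg_left (h4.trans hA) h5
          _ = 1 := by rw [← Real.exp_add]; simp
      rw [heq]
      filter_upwards [hpull, hcondh] with ω hω1 hω2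
      rw [hω1]
      simp only [Pi.mul_apply]
      have h6 : (μ[(fun ω => Real.exp (-c) * Real.exp (l * ξ (k+1) ω))|𝒢 k]) ω ≤ 1 := hω2
      nlinarith [hgpos k ω]
  have hsuper : Supermartingale g 𝒢 μ := supermartingale_nat hadp hgint hstep
  -- the maximal inequality via optional stopping
  set ε : ℝ := Real.exp (l * x - n * c) with hε
  have hεpos : 0 < ε := Real.exp_pos _
  set τ : Ω → WithTop ℕ := fun ω => WithTop.some (hittingBtwn g {y : ℝ | ε ≤ y} 0 n ω) with hτdef
  have hτ : IsStoppingTime 𝒢 τ :=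
    Adapted.isStoppingTime_hittingBtwn (fun k => hgm k) measurableSet_Ici
  have hsubneg : Submartingale (-g) 𝒢 μ := hsuper.neg
  have hsvneg : stoppedValue (-g) τ = -stoppedValue g τ := rfl
  have hsv_int : Integrable (stoppedValue g τ) μ := by
    have h1 := hsubneg.integrable_stoppedValue hτ (fun ω => WithTop.coe_le_coe.2 (hittingBtwn_le ω))
    rw [hsvneg] at h1
    simpa using h1.neg
  have hsv0 : stoppedValue (-g) (fun _ => WithTop.some (0:ℕ)) = fun _ => (-1 : ℝ) := by
    funext ω
    simp only [stoppedValue_const, Pi.neg_apply, hg]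
    norm_num
  have hexp_mono := hsubneg.expected_stoppedValue_mono (isStoppingTime_const 𝒢 0) hτ
    (fun ω => WithTop.coe_le_coe.2 (Nat.zero_le _)) (fun ω => WithTop.coe_le_coe.2 (hittingBtwn_le ω))
  have hsv_le_one : ∫ ω, stoppedValue g τ ω ∂μ ≤ 1 := by
    rw [hsv0, hsvneg] at hexp_mono
    simp only [Pi.neg_apply] at hexp_mono
    rw [integral_const, integral_neg] at hexp_mono
    simp only [measure_univ, probReal_univ, ENNReal.toReal_one, smul_eq_mul, one_mul] at hexp_mono
    linarith
  set E' : Set Ω := {ω | ∃ j ∈ Set.Icc 0 n, g j ω ∈ {y : ℝ | ε ≤ y}} with hE'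
  have hE'meas : MeasurableSet E' := by
    have hEq : E' = ⋃ j ∈ Set.Icc 0 n, {ω | ε ≤ g j ω} := by
      ext ω
      simp [hE', Set.mem_setOf_eq]
    rw [hEq]
    exact MeasurableSet.biUnion (Set.to_countable _)
      (fun j _ => measurableSet_le measurable_const (hgm' j))
  have h1 : ε * (μ E').toReal ≤ ∫ ω in E', stoppedValue g τ ω ∂μ := by
    have := setIntegral_ge_of_const_le hE'meas (measure_ne_top μ _)
      (fun ω hω => stoppedValue_hittingBtwn_mem hω) hsv_int.integrableOn
    rw [smul_eq_mul, mul_comm] at this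
    exact this
  have h2 : ∫ ω in E', stoppedValue g τ ω ∂μ ≤ ∫ ω, stoppedValue g τ ω ∂μ :=
    setIntegral_le_integral hsv_int
      (Filter.Eventually.of_forall (fun ω => (Real.exp_pos _).le))
  have hmuE' : (μ E').toReal ≤ Real.exp ((n:ℝ)*c - l*x) := by
    have h3 : ε * (μ E').toReal ≤ 1 := h1.trans (h2.trans hsv_le_one)
    have h4 : (μ E').toReal ≤ 1 / ε := by
      rw [le_div_iff₀ hεpos]
      linarith [mul_comm ε ((μ E').toReal)]
    calc (μ E').toReal ≤ 1 / ε := h4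
      _ = Real.exp ((n:ℝ)*c - l*x) := by
          rw [hε, one_div, ← Real.exp_neg]
          congr 1
          ring
  have hsubset : {ω | ∃ k, 1 ≤ k ∧ k ≤ n ∧ x ≤ ∑ i ∈ Finset.Icc 1 k, ξ i ω} ⊆ E' := by
    rintro ω ⟨k, hk1, hkn, hxk⟩
    refine ⟨k, ⟨Nat.zero_le _, hkn⟩, ?_⟩
    show ε ≤ g k ω
    rw [hg, hε]
    simp only [min_eq_left hkn]
    rw [Real.exp_le_exp]
    have ha : l * x ≤ l * ∑ i ∈ Finset.Icc 1 k, ξ i ω := mul_le_mul_of_nonneg_left hxk hl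
    have hb' : (k:ℝ) * c ≤ (n:ℝ) * c :=
      mul_le_mul_of_nonneg_right (Nat.cast_le.2 hkn) hc
    linarith
  calc μ {ω | ∃ k, 1 ≤ k ∧ k ≤ n ∧ x ≤ ∑ i ∈ Finset.Icc 1 k, ξ i ω}
      ≤ μ E' := measure_mono hsubset
    _ = ENNReal.ofReal ((μ E').toReal) := (ENNReal.ofReal_toReal (measure_ne_top μ E')).symm
    _ ≤ ENNReal.ofReal (Real.exp ((n:ℝ)*c - l*x)) := ENNReal.ofReal_le_ofReal hmuE'

/-- Convexity chord bound for the exponential on `[-b, 1]`. -/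
lemma AH_chord {l b t : ℝ} (hb : 0 < b) (ht0 : -b ≤ t) (ht1 : t ≤ 1) :
    Real.exp (l*t) ≤ (Real.exp (-(l*b)) + b * Real.exp l)/(1+b)
      + (Real.exp l - Real.exp (-(l*b)))/(1+b) * t := by
  have h1b : 0 < 1 + b := by linarith
  have hθ0 : 0 ≤ (t+b)/(1+b) := div_nonneg (by linarith) h1b.le
  have hθ1 : 0 ≤ (1-t)/(1+b) := div_nonneg (by linarith) h1b.le
  have hsum : (t+b)/(1+b) + (1-t)/(1+b) = 1 := by
    field_simp
    ring
  have hconv := convexOn_exp.2 (Set.mem_univ l) (Set.mem_univ (-(l*b))) hθ0 hθ1 hsum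
  simp only [smul_eq_mul] at hconv
  have harg : (t+b)/(1+b) * l + (1-t)/(1+b) * (-(l*b)) = l*t := by
    field_simp
    ring
  rw [harg] at hconv
  refine hconv.trans (le_of_eq ?_)
  field_simp
  ring

/-- Hoeffding's lemma for the chord intercept. -/
lemma AH_hoeffding_A {l b : ℝ} (hb : 0 < b) :
    (Real.exp (-(l*b)) + b * Real.exp l)/(1+b) ≤ Real.exp (l^2*(1+b)^2/8) := by
  have h1b : 0 < 1 + b := by linarith
  set p := b/(1+b) with hp
  have hp0 : 0 < p := div_pos hb h1b
  have hp1 : p < 1 := by rw [hp, div_lt_one h1b]; linarith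
  have hmain := AH_hoeffding_scalar hp0 hp1 (l*(1+b))
  have hexp : Real.exp (-(l*b)) * Real.exp (l*(1+b)) = Real.exp l := by
    rw [← Real.exp_add]; congr 1; ring
  have hid : (Real.exp (-(l*b)) + b * Real.exp l)/(1+b)
      = Real.exp (-(l*b)) * (1 - p + p * Real.exp (l*(1+b))) := by
    have h0 : Real.exp (-(l*b)) * (1 - p + p * Real.exp (l*(1+b)))
        = Real.exp (-(l*b)) * (1-p) + (Real.exp (-(l*b)) * Real.exp (l*(1+b))) * p := by ring
    rw [h0, hexp, hp]
    field_simp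
    ring
  have hpu : p * (l*(1+b)) = l*b := by
    rw [hp]
    field_simp
  calc (Real.exp (-(l*b)) + b * Real.exp l)/(1+b)
      = Real.exp (-(l*b)) * (1 - p + p * Real.exp (l*(1+b))) := hid
    _ ≤ Real.exp (-(l*b)) * Real.exp (p*(l*(1+b)) + (l*(1+b))^2/8) :=
        mul_le_mul_of_nonneg_left hmain (Real.exp_pos _).le
    _ = Real.exp (-(l*b) + (p*(l*(1+b)) + (l*(1+b))^2/8)) := (Real.exp_add _ _).symm
    _ = Real.exp (l^2*(1+b)^2/8) := by
        rw [hpu]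
        congr 1
        ring

theorem azuma_hoeffding_refined {Ω : Type*} [m : MeasurableSpace Ω] (μ : Measure Ω)
    [IsProbabilityMeasure μ] (n : ℕ) (ℱ : ℕ → MeasurableSpace Ω)
    (hmono : Monotone ℱ) (hle : ∀ i, ℱ i ≤ m)
    (ξ : ℕ → Ω → ℝ) (b : ℝ) (hb : 0 < b)
    (hadapt : ∀ i, 1 ≤ i → i ≤ n → Measurable[ℱ i] (ξ i))
    (hint : ∀ i, 1 ≤ i → i ≤ n → Integrable (ξ i) μ)
    (hmart : ∀ i, 1 ≤ i → i ≤ n → (μ[ξ i | ℱ (i-1)]) =ᵐ[μ] 0)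
    (hbound : ∀ i, 1 ≤ i → i ≤ n → ∀ᵐ ω ∂μ, -b ≤ ξ i ω ∧ ξ i ω ≤ 1)
    (x : ℝ) (hx : 0 ≤ x) :
    μ {ω | ∃ k, 1 ≤ k ∧ k ≤ n ∧ x ≤ ∑ i ∈ Finset.Icc 1 k, ξ i ω}
      ≤ ENNReal.ofReal
          (Real.exp (-(2*x^2 / min ((n:ℝ)*(1+b)^2) (4*((n:ℝ)*b + x/3))))) := by
  rcases Nat.eq_zero_or_pos n with hn | hn
  · subst hn
    have hempty : {ω : Ω | ∃ k, 1 ≤ k ∧ k ≤ 0 ∧ x ≤ ∑ i ∈ Finset.Icc 1 k, ξ i ω} = ∅ := by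
      ext ω
      simp only [Set.mem_setOf_eq, Set.mem_empty_iff_false, iff_false]
      rintro ⟨k, hk1, hk0, -⟩
      omega
    rw [hempty, measure_empty]
    exact zero_le
  -- now n ≥ 1
  have hn1 : (1:ℝ) ≤ (n:ℝ) := by exact_mod_cast hn
  have h1b : (0:ℝ) < 1 + b := by linarith
  have hD1 : (0:ℝ) < (n:ℝ)*(1+b)^2 := by positivity
  have hnb : (0:ℝ) < (n:ℝ)*b := by nlinarith
  have hD2 : (0:ℝ) < 4*((n:ℝ)*b + x/3) := by nlinarith
  rcases le_total ((n:ℝ)*(1+b)^2) (4*((n:ℝ)*b + x/3)) with hD | hD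
  · -- Hoeffding branch
    rw [min_eq_left hD]
    set l : ℝ := 4*x/((n:ℝ)*(1+b)^2) with hldef
    have hl : 0 ≤ l := by positivity
    set c : ℝ := l^2*(1+b)^2/8 with hcdef
    have hc : 0 ≤ c := by positivity
    set A : ℝ := (Real.exp (-(l*b)) + b * Real.exp l)/(1+b) with hAdef
    set B : ℝ := (Real.exp l - Real.exp (-(l*b)))/(1+b) with hBdef
    have hA : A ≤ Real.exp c := AH_hoeffding_A hb
    have hpt : ∀ i, 1 ≤ i → i ≤ n → ∀ᵐ ω ∂μ, Real.exp (l * ξ i ω) ≤ A + B * ξ i ω := by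
      intro i h1 h2
      filter_upwards [hbound i h1 h2] with ω hω
      exact AH_chord hb hω.1 hω.2
    have hmain := AH_engine μ n ℱ hmono hle ξ b hadapt hint hmart hbound
      l c A B hl hc hA hpt x
    refine hmain.trans (ENNReal.ofReal_le_ofReal (Real.exp_le_exp.2 (le_of_eq ?_)))
    rw [hcdef, hldef]
    field_simp
    ring
  · -- Bernstein branch
    rw [min_eq_right hD]
    have hd : (0:ℝ) < (n:ℝ)*b + x/3 := by nlinarith
    set l : ℝ := x/((n:ℝ)*b + x/3) with hldef
    have hl : 0 ≤ l := by positivity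
    have hl3 : l < 3 := by
      rw [hldef, div_lt_iff₀ hd]
      nlinarith
    set c' : ℝ := Real.exp l - 1 - l with hc'def
    have hc' : 0 ≤ c' := by
      have := Real.add_one_le_exp l
      rw [hc'def]
      linarith
    have hA : 1 + c'*b ≤ Real.exp (c'*b) := by
      have := Real.add_one_le_exp (c'*b)
      linarith
    have hc : 0 ≤ c'*b := by positivity
    have hpt : ∀ i, 1 ≤ i → i ≤ n → ∀ᵐ ω ∂μ,
        Real.exp (l * ξ i ω) ≤ (1 + c'*b) + (l + c'*(1-b)) * ξ i ω := by
      intro i h1 h2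
      filter_upwards [hbound i h1 h2] with ω hω
      set t := ξ i ω with ht
      have hq : Real.exp (l*t) ≤ 1 + l*t + c'*t^2 := by
        rcases le_total t 0 with htneg | htpos
        · have hlt : l*t ≤ 0 := mul_nonpos_of_nonneg_of_nonpos hl htneg
          have h1' := AH_exp_le_quad hlt
          have h2' : l^2/2 ≤ c' := by
            have := AH_quad_le_exp hl
            rw [hc'def]
            linarith
          have h3' : (l*t)^2/2 = l^2/2 * t^2 := by ring
          nlinarith [sq_nonneg t]
        · have h2' : Real.exp (l*t) - 1 - l*t ≤ c' * t^2 := by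
            rw [hc'def]
            exact AH_exp_mul_le hl htpos hω.2
          linarith
      have hsq : t^2 ≤ (1-b)*t + b := by nlinarith [hω.1, hω.2]
      have := mul_le_mul_of_nonneg_left hsq hc'
      nlinarith
    have hmain := AH_engine μ n ℱ hmono hle ξ b hadapt hint hmart hbound
      l (c'*b) (1 + c'*b) (l + c'*(1-b)) hl hc hA hpt x
    refine hmain.trans (ENNReal.ofReal_le_ofReal (Real.exp_le_exp.2 ?_))
    -- (n:ℝ)*(c'*b) - l*x ≤ -(2*x^2/(4*((n:ℝ)*b + x/3)))
    have hber := AH_bernstein_mgf hl hl3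
    have h13 : 1 - l/3 = ((n:ℝ)*b)/((n:ℝ)*b + x/3) := by
      rw [hldef]
      field_simp
      ring
    have hkey : (n:ℝ)*b * (l^2/(2*(1-l/3))) = x^2/(2*((n:ℝ)*b + x/3)) := by
      rw [h13, hldef]
      field_simp
    have hlx : l*x = x^2/((n:ℝ)*b + x/3) := by
      rw [hldef]
      field_simp
    have hstep1 : (n:ℝ)*(c'*b) ≤ (n:ℝ)*b * (l^2/(2*(1-l/3))) := by
      have := mul_le_mul_of_nonneg_left hber hnb.le
      calc (n:ℝ)*(c'*b) = (n:ℝ)*b*c' := by ring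
        _ ≤ (n:ℝ)*b * (l^2/(2*(1-l/3))) := by
            apply mul_le_mul_of_nonneg_left _ hnb.le
            rw [hc'def] at *
            exact hber
    rw [hkey] at hstep1
    rw [hlx] at *
    have hfin : x^2/(2*((n:ℝ)*b + x/3)) - x^2/((n:ℝ)*b + x/3)
        = -(2*x^2/(4*((n:ℝ)*b + x/3))) := by
      field_simp
      ring
    linarith [hstep1, hfin]
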